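/- Let A ∈ ℝ^{m×d}, Y ∈ ℝ^{m×n}, let 1 ≤ q < 2, and let X_k, X_{k+1} ∈ ℝ^{d×n} be such that every row of AX_k − Y is nonzero. Then Σ_{i=1}^m ‖(AX_{k+1} − Y)^i‖₂^q − (q/2)·Σ_{i=1}^m ‖(AX_{k+1} − Y)^i‖₂² / ‖(AX_k − Y)^i‖₂^{2−q} ≤ (1 − q/2)·Σ_{i=1}^m ‖(AX_k − Y)^i‖₂^q. -/

import Mathlib

open Matrix

/-- Euclidean norm of the i-th row of a matrix. -/
noncomputable def rowNorm {m n : ℕ} (M : Matrix (Fin m) (Fin n) ℝ) (i : Fin m) : ℝ :=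
  Real.sqrt (∑ j, M i j ^ 2)

lemma key_ineq {a b q : ℝ} (ha : 0 ≤ a) (hb : 0 < b) (hq1 : 1 ≤ q) (hq2 : q < 2) :
    a ^ q ≤ q / 2 * (a ^ 2 / b ^ (2 - q)) + (1 - q / 2) * b ^ q := by
  have hb2 : (0:ℝ) < b ^ 2 := by positivity
  have hbq : (0:ℝ) < b ^ q := Real.rpow_pos_of_pos hb q
  have hs : -1 ≤ a ^ 2 / b ^ 2 - 1 := by
    have : 0 ≤ a ^ 2 / b ^ 2 := by positivity
    linarith
  have hmain := rpow_one_add_le_one_add_mul_self hs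
    (by linarith : (0:ℝ) ≤ q / 2) (by linarith : q / 2 ≤ 1)
  have e0 : (1 + (a ^ 2 / b ^ 2 - 1)) = a ^ 2 / b ^ 2 := by ring
  rw [e0] at hmain
  have e1 : (a ^ 2 / b ^ 2 : ℝ) ^ (q / 2) = a ^ q / b ^ q := by
    rw [Real.div_rpow (by positivity) (by positivity)]
    congr 1
    · rw [← Real.rpow_natCast a 2, ← Real.rpow_mul ha]
      push_cast; ring_nf
    · rw [← Real.rpow_natCast b 2, ← Real.rpow_mul hb.le]
      push_cast; ring_nf
  rw [e1] at hmain
  have hmul := mul_le_mul_of_nonneg_right hmain hbq.le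
  rw [div_mul_cancel₀ _ hbq.ne'] at hmul
  have e2 : b ^ (2 - q) * b ^ q = b ^ 2 := by
    rw [← Real.rpow_natCast b 2, ← Real.rpow_add hb]
    norm_num
  have hb2q : (0:ℝ) < b ^ (2 - q) := Real.rpow_pos_of_pos hb _
  have e3 : a ^ 2 / b ^ 2 * b ^ q = a ^ 2 / b ^ (2 - q) := by
    rw [← e2]; field_simp
  calc a ^ q ≤ (1 + q / 2 * (a ^ 2 / b ^ 2 - 1)) * b ^ q := hmul
    _ = q / 2 * (a ^ 2 / b ^ 2 * b ^ q) + (1 - q / 2) * b ^ q := by ring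
    _ = q / 2 * (a ^ 2 / b ^ (2 - q)) + (1 - q / 2) * b ^ q := by rw [e3]

lemma rowNorm_nonneg {m n : ℕ} (M : Matrix (Fin m) (Fin n) ℝ) (i : Fin m) :
    0 ≤ rowNorm M i := Real.sqrt_nonneg _

lemma rowNorm_pos {m n : ℕ} (M : Matrix (Fin m) (Fin n) ℝ) (i : Fin m)
    (h : M i ≠ 0) : 0 < rowNorm M i := by
  obtain ⟨j, hj⟩ := Function.ne_iff.mp h
  apply Real.sqrt_pos.mpr
  apply Finset.sum_pos' (fun j _ => by positivity)
  refine ⟨j, Finset.mem_univ j, ?_⟩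
  rw [← sq_abs]
  exact pow_pos (abs_pos.mpr hj) 2

theorem stmt_4 {m d n : ℕ} (A : Matrix (Fin m) (Fin d) ℝ) (Y : Matrix (Fin m) (Fin n) ℝ)
    (q : ℝ) (hq1 : 1 ≤ q) (hq2 : q < 2)
    (Xk Xk1 : Matrix (Fin d) (Fin n) ℝ)
    (hrow : ∀ i, (A * Xk - Y) i ≠ 0) :
    ∑ i, rowNorm (A * Xk1 - Y) i ^ q
      - (q / 2) * ∑ i, rowNorm (A * Xk1 - Y) i ^ 2 / rowNorm (A * Xk - Y) i ^ (2 - q)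
    ≤ (1 - q / 2) * ∑ i, rowNorm (A * Xk - Y) i ^ q := by
  have h : ∑ i, rowNorm (A * Xk1 - Y) i ^ q ≤
      ∑ i, (q / 2 * (rowNorm (A * Xk1 - Y) i ^ 2 / rowNorm (A * Xk - Y) i ^ (2 - q))
        + (1 - q / 2) * rowNorm (A * Xk - Y) i ^ q) := by
    apply Finset.sum_le_sum
    intro i _
    exact key_ineq (rowNorm_nonneg _ i) (rowNorm_pos _ i (hrow i)) hq1 hq2
  rw [Finset.sum_add_distrib, ← Finset.mul_sum, ← Finset.mul_sum] at h
  linarith
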